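/- Let q = p^n ≡ 3 (mod 4) be an odd prime power and χ the quadratic character of 𝔽_q. Then ∑_{x ∈ 𝔽_q} χ((x+1)(x²+x+1)) = −∑_{x ∈ 𝔽_q} χ(x(x+1)(x−3)). -/

import Mathlib

open Finset

theorem stmt2 (p n : ℕ) (hp : p.Prime) (hp2 : p ≠ 2) (hn : 0 < n)
    (F : Type*) [Field F] [Fintype F] [DecidableEq F]
    (hcard : Fintype.card F = p ^ n) (hq : p ^ n % 4 = 3) :
    ∑ x : F, quadraticChar F ((x + 1) * (x ^ 2 + x + 1)) = - (∑ x : F, quadraticChar F (x * (x + 1) * (x - 3))) := by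
  have hF : ringChar F ≠ 2 := by
    intro h
    have h2 := FiniteField.even_card_iff_char_two.mp h
    rw [hcard] at h2
    have : p ^ n % 2 = 1 := Nat.odd_of_mod_four_eq_three hq
    omega
  have h2 : (2 : F) ≠ 0 := Ring.two_ne_zero hF
  have h4 : (4 : F) ≠ 0 := by
    intro h
    apply h2
    have : (2 : F) * 2 = 0 := by rw [← h]; norm_num
    rcases mul_eq_zero.mp this with h' | h' <;> exact h'
  have hneg1 : quadraticChar F (-1) = -1 := by
    rw [quadraticChar_neg_one hF, hcard]
    exact ZMod.χ₄_nat_three_mod_four hq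
  have hnegval : ∀ u : F, quadraticChar F (-u) = - quadraticChar F u := by
    intro u
    rw [neg_eq_neg_one_mul, map_mul, hneg1, neg_one_mul]
  set s : Finset F := (univ : Finset F).filter (fun x => x ≠ 0) with hs
  -- key fiber count
  have key : ∀ t : F,
      (((s.filter (fun x => x + x⁻¹ = t))).card : ℤ) = quadraticChar F (t ^ 2 - 4) + 1 := by
    intro t
    rw [← quadraticChar_card_sqrts hF (t ^ 2 - 4)]
    norm_cast
    apply Finset.card_bij' (fun x _ => 2 * x - t) (fun y _ => (y + t) / 2)
    · intro x hx
      simp only [hs, mem_filter, mem_univ, true_and] at hx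
      obtain ⟨hx0, hxt⟩ := hx
      rw [Set.mem_toFinset, Set.mem_setOf_eq]
      have hqx : x ^ 2 - t * x + 1 = 0 := by
        field_simp at hxt
        linear_combination hxt
      linear_combination (4 : F) * hqx
    · intro y hy
      rw [Set.mem_toFinset, Set.mem_setOf_eq] at hy
      have hyt : y + t ≠ 0 := by
        intro h
        apply h4
        linear_combination hy + (t - y) * h
      have hx0 : (y + t) / 2 ≠ 0 := div_ne_zero hyt h2
      simp only [hs, mem_filter, mem_univ, true_and]
      refine ⟨hx0, ?_⟩
      have hinv : ((y + t) / 2)⁻¹ = t - (y + t) / 2 := by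
        apply inv_eq_of_mul_eq_one_right
        field_simp
        linear_combination -hy
      rw [hinv]; ring
    · intro x hx
      field_simp
      ring
    · intro y hy
      field_simp
      ring
  -- main chain
  have step1 : ∑ x : F, quadraticChar F ((x + 1) * (x ^ 2 + x + 1))
      = ∑ x : F, quadraticChar F (x * (x ^ 2 - x + 1)) := by
    apply Fintype.sum_equiv (Equiv.addRight (1 : F))
    intro x
    simp only [Equiv.coe_addRight]
    congr 1
    ring
  have step2a : ∑ x : F, quadraticChar F (x * (x ^ 2 - x + 1))
      = ∑ x ∈ s, quadraticChar F (x * (x ^ 2 - x + 1)) := by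
    symm
    apply Finset.sum_subset (Finset.subset_univ s)
    intro x _ hxs
    have hx0 : x = 0 := by simpa [hs] using hxs
    simp [hx0]
  have step2b : ∑ x ∈ s, quadraticChar F (x * (x ^ 2 - x + 1))
      = ∑ x ∈ s, quadraticChar F (x + x⁻¹ - 1) := by
    apply Finset.sum_congr rfl
    intro x hxs
    have hx0 : x ≠ 0 := by simpa [hs] using hxs
    have harg : x * (x ^ 2 - x + 1) = x ^ 2 * (x + x⁻¹ - 1) := by
      field_simp
      ring
    rw [harg, map_mul, quadraticChar_sq_one' hx0, one_mul]
  have step3 : ∑ x ∈ s, quadraticChar F (x + x⁻¹ - 1)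
      = ∑ t ∈ s.image (fun x => x + x⁻¹),
          (s.filter (fun x => x + x⁻¹ = t)).card • quadraticChar F (t - 1) :=
    Finset.sum_comp (fun t : F => quadraticChar F (t - 1)) (fun x : F => x + x⁻¹)
  have step4 : ∑ t ∈ s.image (fun x => x + x⁻¹),
          (s.filter (fun x => x + x⁻¹ = t)).card • quadraticChar F (t - 1)
      = ∑ t : F, (s.filter (fun x => x + x⁻¹ = t)).card • quadraticChar F (t - 1) := by
    apply Finset.sum_subset (Finset.subset_univ _)
    intro t _ ht
    have hempty : s.filter (fun x => x + x⁻¹ = t) = ∅ := by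
      rw [Finset.filter_eq_empty_iff]
      intro x hx hxt
      exact ht (Finset.mem_image.mpr ⟨x, hx, hxt⟩)
    rw [hempty]
    simp
  have step5 : ∑ t : F, (s.filter (fun x => x + x⁻¹ = t)).card • quadraticChar F (t - 1)
      = ∑ t : F, quadraticChar F ((t ^ 2 - 4) * (t - 1)) + ∑ t : F, quadraticChar F (t - 1) := by
    rw [← Finset.sum_add_distrib]
    apply Finset.sum_congr rfl
    intro t _
    rw [nsmul_eq_mul, key t, map_mul, add_mul, one_mul]
  have step6 : ∑ t : F, quadraticChar F (t - 1) = 0 := by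
    have h := Fintype.sum_equiv (Equiv.subRight (1 : F)) (fun t : F => quadraticChar F (t - 1))
      (fun a : F => quadraticChar F a) (fun t => rfl)
    exact h.trans (quadraticChar_sum_zero hF)
  have step7 : ∑ t : F, quadraticChar F ((t ^ 2 - 4) * (t - 1))
      = ∑ a : F, quadraticChar F (a * (a - 1) * (a + 3)) := by
    symm
    apply Fintype.sum_equiv (Equiv.addRight (1 : F))
    intro a
    simp only [Equiv.coe_addRight]
    congr 1
    ring
  have stepR : ∑ x : F, quadraticChar F (x * (x + 1) * (x - 3))
      = - ∑ a : F, quadraticChar F (a * (a - 1) * (a + 3)) := by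
    have h1 : ∑ a : F, quadraticChar F (-(a * (a - 1) * (a + 3)))
        = ∑ x : F, quadraticChar F (x * (x + 1) * (x - 3)) := by
      apply Fintype.sum_equiv (Equiv.neg F)
      intro a
      simp only [Equiv.neg_apply]
      congr 1
      ring
    rw [← h1]
    rw [← Finset.sum_neg_distrib]
    apply Finset.sum_congr rfl
    intro a _
    exact hnegval _
  rw [step1, step2a, step2b, step3, step4, step5, step6, step7, stepR, add_zero, neg_neg]
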